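/- For every n ≥ 3, the characteristic polynomial of the Seidel matrix S of the threshold graph with binary string 0^{n−2}1² equals (x + 1)^{n−3}·(x − 1)·(x² + (4 − n)x + (7 − 3n)). -/

import Mathlib

open Polynomial Matrix

private lemma aux_filter_lt_range (n m : ℕ) (h : m ≤ n) :
    (Finset.range n).filter (fun i => i < m) = Finset.range m := by
  ext i; simp; omega

set_option maxHeartbeats 1000000 in
theorem stmt_18 (n : ℕ) (hn : 3 ≤ n)
    (β : ℕ → ℝ)
    (hβ : ∀ j, 1 ≤ j → j ≤ n → β j = if j ≤ n - 2 then 1 else -1)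
    (S : Matrix (Fin n) (Fin n) ℝ)
    (hS : ∀ i j : Fin n, S i j = if i = j then 0 else β (max (i : ℕ) (j : ℕ) + 1)) :
    S.charpoly = (X + 1) ^ (n - 3) * (X - 1) *
      (X ^ 2 + C (4 - (n : ℝ)) * X + C (7 - 3 * (n : ℝ))) := by
  have hn2 : n - 2 < n := by omega
  have hn1 : n - 1 < n := by omega
  set W : Matrix (Fin n) (Fin 3) ℝ := fun i =>
    ![if (i:ℕ) < n-2 then 1 else -1, if (i:ℕ) = n-2 then 1 else -1,
      if (i:ℕ) = n-1 then 1 else -1] with hW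
  set B : Matrix (Fin n) (Fin 3) ℝ := fun i =>
    ![if (i:ℕ) < n-2 then 1 else 0, if (i:ℕ) = n-2 then 1 else 0,
      if (i:ℕ) = n-1 then 1 else 0] with hB
  have hfact : ∀ i j, S i j = (W * Bᵀ) i j - (if i = j then 1 else 0) := by
    intro i j
    have hi : (i:ℕ) < n := i.isLt
    have hj : (j:ℕ) < n := j.isLt
    rw [hS i j, hβ (max (i:ℕ) (j:ℕ) + 1) (by omega) (by omega)]
    simp only [mul_apply, transpose_apply]
    simp only [mul_apply, Fin.sum_univ_three, transpose_apply, hW, hB,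
      Matrix.cons_val_zero, Matrix.cons_val_one, Matrix.head_cons, Fin.ext_iff,
      Matrix.cons_val_two, Matrix.tail_cons]
    split_ifs <;> first | (exfalso; omega) | norm_num
  -- sum helpers
  have hsum1 : ∀ (f : ℕ → ℝ), (∑ k : Fin n, if (k:ℕ) < n-2 then f (k:ℕ) else 0)
      = ∑ i ∈ Finset.range (n-2), f i := by
    intro f
    rw [Fin.sum_univ_eq_sum_range (fun i => if i < n-2 then f i else 0) n,
      ← Finset.sum_filter, aux_filter_lt_range n (n-2) (by omega)]
  have hsumE : ∀ (m : ℕ) (hm : m < n) (f : Fin n → ℝ),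
      (∑ k : Fin n, (if (k:ℕ) = m then 1 else 0) * f k) = f ⟨m, hm⟩ := by
    intro m hm f
    rw [Finset.sum_eq_single (⟨m, hm⟩ : Fin n)]
    · simp
    · intro b _ hb
      have hb' : (b:ℕ) ≠ m := fun h => hb (Fin.ext h)
      simp [hb']
    · simp
  have hcast : ((n-2 : ℕ) : ℝ) = (n:ℝ) - 2 := by
    rw [Nat.cast_sub (by omega)]; norm_num
  have hG : Bᵀ * W = !![(n:ℝ)-2, -((n:ℝ)-2), -((n:ℝ)-2); (-1:ℝ), 1, -1; (-1:ℝ), -1, 1] := by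
    have hne : n - 1 ≠ n - 2 := by omega
    have hne' : ¬ (n - 2 < n - 2) := by omega
    have hne'' : ¬ (n - 1 < n - 2) := by omega
    ext i j
    fin_cases i <;> fin_cases j <;> simp only [mul_apply, transpose_apply] <;>
      simp only [Fin.reduceFinMk, mul_apply, transpose_apply, hW, hB, Matrix.cons_val_zero,
        Matrix.cons_val_one, Matrix.head_cons, Matrix.cons_val_two, Matrix.tail_cons,
        Matrix.cons_val', Matrix.head_fin_const, Matrix.empty_val', Matrix.cons_val_fin_one,
        Matrix.of_apply]
    · rw [show (∑ k : Fin n, (if (k:ℕ) < n-2 then (1:ℝ) else 0) *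
          (if (k:ℕ) < n-2 then 1 else -1)) = ∑ k : Fin n, if (k:ℕ) < n-2 then (1:ℝ) else 0 from
          Finset.sum_congr rfl (fun k _ => by split_ifs <;> norm_num),
        hsum1 (fun _ => (1:ℝ)), Finset.sum_const, Finset.card_range, nsmul_eq_mul, hcast]
      ring
    · rw [show (∑ k : Fin n, (if (k:ℕ) < n-2 then (1:ℝ) else 0) *
          (if (k:ℕ) = n-2 then 1 else -1)) = ∑ k : Fin n, if (k:ℕ) < n-2 then (-1:ℝ) else 0 from
          Finset.sum_congr rfl (fun k _ => by split_ifs <;> first | (exfalso; omega) | norm_num),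
        hsum1 (fun _ => (-1:ℝ)), Finset.sum_const, Finset.card_range, nsmul_eq_mul, hcast]
      ring
    · rw [show (∑ k : Fin n, (if (k:ℕ) < n-2 then (1:ℝ) else 0) *
          (if (k:ℕ) = n-1 then 1 else -1)) = ∑ k : Fin n, if (k:ℕ) < n-2 then (-1:ℝ) else 0 from
          Finset.sum_congr rfl (fun k _ => by split_ifs <;> first | (exfalso; omega) | norm_num),
        hsum1 (fun _ => (-1:ℝ)), Finset.sum_const, Finset.card_range, nsmul_eq_mul, hcast]
      ring
    · rw [hsumE (n-2) hn2]; simp [hne']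
    · rw [hsumE (n-2) hn2]; simp
    · rw [hsumE (n-2) hn2]; simp [hne.symm]  -- (n-2) = n-1 false
    · rw [hsumE (n-1) hn1]; simp [hne'']
    · rw [hsumE (n-1) hn1]; simp [hne]
    · rw [hsumE (n-1) hn1]; simp
  apply Polynomial.eq_of_infinite_eval_eq
  have hinf : ({(-1 : ℝ)}ᶜ : Set ℝ).Infinite := (Set.finite_singleton _).infinite_compl
  refine hinf.mono ?_
  intro x hx
  have hc : x + 1 ≠ 0 := by
    intro h
    exact hx (by simp [Set.mem_singleton_iff]; linarith)
  simp only [Set.mem_setOf_eq]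
  have hL : eval x (S.charpoly) = det ((x+1) • (1:Matrix (Fin n) (Fin n) ℝ) - W * Bᵀ) := by
    rw [Matrix.charpoly, ← coe_evalRingHom, RingHom.map_det]
    congr 1
    ext i j
    rw [RingHom.mapMatrix_apply, Matrix.map_apply, charmatrix_apply, hfact i j]
    by_cases h : i = j
    · subst h
      simp [one_apply, Matrix.smul_apply]
      ring
    · simp [h, one_apply_ne h, diagonal_apply_ne _ h]
  have e1 : (x+1) • (1:Matrix (Fin n) (Fin n) ℝ) - W * Bᵀ
      = (x+1) • (1 - ((x+1)⁻¹ • W) * Bᵀ) := by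
    rw [smul_sub, Matrix.smul_mul, smul_smul, mul_inv_cancel₀ hc, one_smul]
  rw [hL, e1, det_smul, det_one_sub_mul_comm, Matrix.mul_smul, hG]
  have hpow : (x+1) ^ Fintype.card (Fin n) = (x+1)^(n-3) * (x+1)^3 := by
    rw [← pow_add, Fintype.card_fin]; congr 1; omega
  rw [hpow]
  have hD : (x+1)^3 * det ((1:Matrix (Fin 3) (Fin 3) ℝ) -
      (x+1)⁻¹ • !![(n:ℝ)-2, -((n:ℝ)-2), -((n:ℝ)-2); (-1:ℝ), 1, -1; (-1:ℝ), -1, 1])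
      = (x-1) * (x^2 + (4-(n:ℝ))*x + (7-3*(n:ℝ))) := by
    have hM : ((1:Matrix (Fin 3) (Fin 3) ℝ) -
        (x+1)⁻¹ • !![(n:ℝ)-2, -((n:ℝ)-2), -((n:ℝ)-2); (-1:ℝ), 1, -1; (-1:ℝ), -1, 1])
        = !![1 - (x+1)⁻¹*((n:ℝ)-2), (x+1)⁻¹*((n:ℝ)-2), (x+1)⁻¹*((n:ℝ)-2);
             (x+1)⁻¹, 1 - (x+1)⁻¹, (x+1)⁻¹;
             (x+1)⁻¹, (x+1)⁻¹, 1 - (x+1)⁻¹] := by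
      ext i j
      fin_cases i <;> fin_cases j <;> simp [one_apply, vecHead, vecTail] <;> ring
    rw [hM, det_fin_three]
    simp only [Matrix.cons_val', Matrix.cons_val_zero, Matrix.cons_val_one, Matrix.head_cons,
      Matrix.cons_val_two, Matrix.tail_cons, Matrix.head_fin_const, Matrix.empty_val',
      Matrix.cons_val_fin_one, Matrix.of_apply, Matrix.vecHead, Matrix.vecTail,
      Function.comp_apply, Matrix.cons_val_succ]
    field_simp
    ring
  have hR : eval x ((X + 1) ^ (n - 3) * (X - 1) *
      (X ^ 2 + C (4 - (n : ℝ)) * X + C (7 - 3 * (n : ℝ))))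
      = (x+1)^(n-3) * ((x-1) * (x^2 + (4-(n:ℝ))*x + (7-3*(n:ℝ)))) := by
    simp [eval_mul, eval_pow, eval_add, eval_sub]
    ring
  rw [hR, mul_assoc]
  exact congrArg _ hD
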